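/- The summatory function of Klee's totient satisfies Σ_{n ≤ x} φ_b(n) = x²/(2ζ(2b)) + O(x). -/

import Mathlib

noncomputable def ggcd (b r s : ℕ) : ℕ := sSup {d : ℕ | 0 < d ∧ d ^ b ∣ r ∧ d ^ b ∣ s}

noncomputable def klee (b n : ℕ) : ℕ :=
  ((Finset.Icc 1 n).filter (fun k => ggcd b k n = 1)).card

open Finset ArithmeticFunction
open scoped LSeries.notation
open scoped ArithmeticFunction.Moebius ArithmeticFunction.zeta

lemma ggcd_eq_one_iff {b k n : ℕ} (hb : 1 ≤ b) (hk : 0 < k) :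
    (sSup {d : ℕ | 0 < d ∧ d ^ b ∣ k ∧ d ^ b ∣ n} = 1) ↔ ∀ d, d ^ b ∣ k → d ^ b ∣ n → d ≤ 1 := by
  set S : Set ℕ := {d : ℕ | 0 < d ∧ d ^ b ∣ k ∧ d ^ b ∣ n} with hS
  have h1 : 1 ∈ S := ⟨one_pos, by simp, by simp⟩
  have hbdd : BddAbove S := by
    refine ⟨k, fun d hd => ?_⟩
    obtain ⟨hd0, hdk, -⟩ := hd
    calc d ≤ d ^ b := Nat.le_self_pow (by omega) d
    _ ≤ k := Nat.le_of_dvd hk hdk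
  constructor
  · intro h d hdk hdn
    rcases Nat.eq_zero_or_pos d with rfl | hd0
    · exfalso; rw [zero_pow (by omega)] at hdk; omega
    · have : d ∈ S := ⟨hd0, hdk, hdn⟩
      have := le_csSup hbdd this
      omega
  · intro h
    have : S = {1} := by
      ext d
      simp only [Set.mem_singleton_iff, hS, Set.mem_setOf_eq]
      constructor
      · rintro ⟨hd0, hdk, hdn⟩; have := h d hdk hdn; omega
      · rintro rfl; exact h1
    rw [this, csSup_singleton]

lemma moebius_sum_divisors (n : ℕ) : ∑ d ∈ n.divisors, (μ d : ℤ) = if n = 1 then 1 else 0 := by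
  have h : (ζ * μ : ArithmeticFunction ℤ) n = ∑ d ∈ n.divisors, (μ d : ℤ) := by
    rw [coe_zeta_mul_apply]
  rw [coe_zeta_mul_moebius] at h
  rw [← h, one_apply]

lemma squarefree_prod_primes {s : Finset ℕ} (hs : ∀ p ∈ s, p.Prime) :
    Squarefree (∏ p ∈ s, p) := by
  induction s using Finset.induction with
  | empty => simp only [Finset.prod_empty]; exact squarefree_one
  | @insert p s hx ih =>
    rw [Finset.prod_insert hx, Nat.squarefree_mul_iff]
    have hp := hs p (mem_insert_self _ _)
    refine ⟨?_, hp.squarefree, ih fun q hq => hs q (mem_insert_of_mem hq)⟩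
    rw [Nat.coprime_prod_right_iff]
    intro q hq
    exact (Nat.coprime_primes hp (hs q (mem_insert_of_mem hq))).mpr (fun h => hx (h ▸ hq))

lemma prod_primes_pow_dvd {s : Finset ℕ} {m b : ℕ} (hs : ∀ p ∈ s, p.Prime)
    (hd : ∀ p ∈ s, p ^ b ∣ m) : (∏ p ∈ s, p) ^ b ∣ m := by
  induction s using Finset.induction with
  | empty => simp only [Finset.prod_empty, one_pow]; exact one_dvd m
  | @insert p s hx ih =>
    rw [Finset.prod_insert hx, mul_pow]
    have hp := hs p (mem_insert_self _ _)
    have hcop : Nat.Coprime (p ^ b) ((∏ q ∈ s, q) ^ b) := by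
      apply Nat.Coprime.pow
      rw [Nat.coprime_prod_right_iff]
      intro q hq
      exact (Nat.coprime_primes hp (hs q (mem_insert_of_mem hq))).mpr (fun h => hx (h ▸ hq))
    exact hcop.mul_dvd_of_dvd_of_dvd (hd p (mem_insert_self _ _))
      (ih (fun q hq => hs q (mem_insert_of_mem hq)) (fun q hq => hd q (mem_insert_of_mem hq)))

open scoped Classical in
/-- Key indicator identity. -/
lemma moebius_indicator {b : ℕ} (hb : 1 ≤ b) {m : ℕ} (hm : 0 < m) :
    ∑ d ∈ m.divisors.filter (fun d => d ^ b ∣ m), (μ d : ℤ) =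
      if (∀ d, d ^ b ∣ m → d ≤ 1) then 1 else 0 := by
  classical
  set s : Finset ℕ := m.primeFactors.filter (fun p => p ^ b ∣ m) with hs
  have hsp : ∀ p ∈ s, p.Prime := fun p hp => Nat.prime_of_mem_primeFactors (mem_filter.mp hp).1
  set r : ℕ := ∏ p ∈ s, p with hr
  have hrsf : Squarefree r := squarefree_prod_primes hsp
  have step1 : ∑ d ∈ (m.divisors.filter (fun d => d ^ b ∣ m)).filter Squarefree, (μ d : ℤ) =
      ∑ d ∈ m.divisors.filter (fun d => d ^ b ∣ m), (μ d : ℤ) := by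
    apply Finset.sum_filter_of_ne
    intro d _ hne
    by_contra hsf
    exact hne (moebius_eq_zero_of_not_squarefree hsf)
  have step2 : (m.divisors.filter (fun d => d ^ b ∣ m)).filter Squarefree = r.divisors := by
    ext d
    simp only [Finset.mem_filter, Nat.mem_divisors]
    constructor
    · rintro ⟨⟨⟨hdm, hm0⟩, hdbm⟩, hdsf⟩
      refine ⟨?_, hrsf.ne_zero⟩
      rw [← Nat.prod_primeFactors_of_squarefree hdsf]
      apply Finset.prod_dvd_prod_of_subset _ _ _ ?_
      intro p hp
      have hpp := Nat.prime_of_mem_primeFactors hp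
      have hpd : p ∣ d := Nat.dvd_of_mem_primeFactors hp
      rw [hs, Finset.mem_filter, Nat.mem_primeFactors]
      exact ⟨⟨hpp, hpd.trans hdm, hm0⟩, (pow_dvd_pow_of_dvd hpd b).trans hdbm⟩
    · rintro ⟨hdr, -⟩
      have hdbm : d ^ b ∣ m := by
        refine dvd_trans (pow_dvd_pow_of_dvd hdr b) ?_
        exact prod_primes_pow_dvd hsp (fun p hp => (mem_filter.mp hp).2)
      have hdm : d ∣ m := (dvd_pow_self d (by omega)).trans hdbm
      exact ⟨⟨⟨hdm, hm.ne'⟩, hdbm⟩, hrsf.squarefree_of_dvd hdr⟩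
  rw [← step1, step2, moebius_sum_divisors]
  congr 1
  rw [eq_iff_iff]
  constructor
  · intro hr1 d hdbm
    by_contra hd
    push_neg at hd
    obtain ⟨p, hpp, hpd⟩ := Nat.exists_prime_and_dvd (by omega : d ≠ 1)
    have hpbm : p ^ b ∣ m := (pow_dvd_pow_of_dvd hpd b).trans hdbm
    have hps : p ∈ s := by
      rw [hs, Finset.mem_filter, Nat.mem_primeFactors]
      exact ⟨⟨hpp, (dvd_pow_self p (by omega)).trans hpbm, hm.ne'⟩, hpbm⟩
    have hdvd : p ∣ r := Finset.dvd_prod_of_mem _ hps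
    rw [hr1] at hdvd
    exact absurd (Nat.eq_one_of_dvd_one hdvd) hpp.one_lt.ne'
  · intro h
    rw [hr]
    apply Finset.prod_eq_one
    intro p hp
    have h2 := (hsp p hp).two_le
    have := h p (mem_filter.mp hp).2
    omega

lemma klee_eq {b : ℕ} (hb : 1 ≤ b) {n : ℕ} (hn : 0 < n) :
    (klee b n : ℤ) = ∑ d ∈ n.divisors.filter (fun d => d ^ b ∣ n),
      (μ d : ℤ) * ((n / d ^ b : ℕ) : ℤ) := by
  classical
  have hcast : (((Finset.Icc 1 n).filter (fun k => ggcd b k n = 1)).card : ℤ) =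
      ∑ k ∈ Finset.Icc 1 n, if ggcd b k n = 1 then (1:ℤ) else 0 := by
    rw [Finset.card_filter]; push_cast; rfl
  rw [klee, hcast]
  have step1 : ∀ k ∈ Finset.Icc 1 n, (if ggcd b k n = 1 then (1:ℤ) else 0) =
      ∑ d ∈ n.divisors.filter (fun d => d ^ b ∣ n ∧ d ^ b ∣ k), (μ d : ℤ) := by
    intro k hk
    rw [Finset.mem_Icc] at hk
    have hk0 : 0 < k := hk.1
    have hgcd : 0 < Nat.gcd k n := Nat.gcd_pos_of_pos_left n hk0
    have hiff : (ggcd b k n = 1) ↔ ∀ d, d ^ b ∣ Nat.gcd k n → d ≤ 1 := by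
      rw [ggcd, ggcd_eq_one_iff hb hk0]
      constructor
      · intro h d hd
        rw [Nat.dvd_gcd_iff] at hd
        exact h d hd.1 hd.2
      · intro h d h1 h2
        exact h d (Nat.dvd_gcd h1 h2)
    have hset : (Nat.gcd k n).divisors.filter (fun d => d ^ b ∣ Nat.gcd k n) =
        n.divisors.filter (fun d => d ^ b ∣ n ∧ d ^ b ∣ k) := by
      ext d
      simp only [Finset.mem_filter, Nat.mem_divisors, Nat.dvd_gcd_iff]
      constructor
      · rintro ⟨⟨hdg, -⟩, hdk, hdn⟩
        exact ⟨⟨(dvd_pow_self d (by omega : b ≠ 0)).trans hdn, hn.ne'⟩, hdn, hdk⟩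
      · rintro ⟨⟨hdn', -⟩, hdn, hdk⟩
        have hddg : d ∣ Nat.gcd k n := (dvd_pow_self d (by omega : b ≠ 0)).trans
          (Nat.dvd_gcd hdk hdn)
        rw [Nat.dvd_gcd_iff] at hddg
        exact ⟨⟨hddg, hgcd.ne'⟩, hdk, hdn⟩
    simp only [hiff]
    rw [← moebius_indicator hb hgcd]
    exact Finset.sum_congr hset (fun _ _ => rfl)
  rw [Finset.sum_congr rfl step1]
  have step2 : ∀ k ∈ Finset.Icc 1 n,
      ∑ d ∈ n.divisors.filter (fun d => d ^ b ∣ n ∧ d ^ b ∣ k), (μ d : ℤ) =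
      ∑ d ∈ n.divisors.filter (fun d => d ^ b ∣ n), if d ^ b ∣ k then (μ d : ℤ) else 0 := by
    intro k _
    rw [← Finset.sum_filter, Finset.filter_filter]
  rw [Finset.sum_congr rfl step2, Finset.sum_comm]
  apply Finset.sum_congr rfl
  intro d _
  rw [← Finset.sum_filter]
  have hIcc : Finset.Icc 1 n = Finset.Ioc 0 n := by ext x; simp; omega
  rw [hIcc, Finset.sum_const, Nat.Ioc_filter_dvd_card_eq_div, nsmul_eq_mul, mul_comm]

lemma sum_klee {b : ℕ} (hb : 1 ≤ b) (N : ℕ) :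
    ∑ n ∈ Finset.Icc 1 N, (klee b n : ℤ) =
      ∑ d ∈ Finset.Icc 1 N, (μ d : ℤ) * ∑ m ∈ Finset.Icc 1 (N / d ^ b), (m : ℤ) := by
  classical
  have step1 : ∀ n ∈ Finset.Icc 1 N, (klee b n : ℤ) =
      ∑ d ∈ Finset.Icc 1 N, if d ^ b ∣ n then (μ d : ℤ) * ((n / d ^ b : ℕ) : ℤ) else 0 := by
    intro n hn
    rw [Finset.mem_Icc] at hn
    rw [klee_eq hb (by omega : 0 < n), ← Finset.sum_filter]
    apply Finset.sum_congr _ (fun _ _ => rfl)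
    ext d
    simp only [Finset.mem_filter, Nat.mem_divisors, Finset.mem_Icc]
    constructor
    · rintro ⟨⟨hdn, -⟩, hdbn⟩
      have h1 : 1 ≤ d := Nat.pos_of_dvd_of_pos hdn (by omega)
      have h2 : d ≤ n := Nat.le_of_dvd (by omega) hdn
      exact ⟨⟨h1, by omega⟩, hdbn⟩
    · rintro ⟨⟨h1, h2⟩, hdbn⟩
      exact ⟨⟨(dvd_pow_self d (by omega : b ≠ 0)).trans hdbn, by omega⟩, hdbn⟩
  rw [Finset.sum_congr rfl step1, Finset.sum_comm]
  apply Finset.sum_congr rfl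
  intro d hd
  rw [Finset.mem_Icc] at hd
  have hdb : 0 < d ^ b := Nat.pow_pos (by omega)
  rw [← Finset.sum_filter, Finset.mul_sum]
  refine Finset.sum_nbij' (fun n => n / d ^ b) (fun m => d ^ b * m) ?_ ?_ ?_ ?_ ?_
  · intro n hn
    simp only [Finset.mem_filter, Finset.mem_Icc] at hn ⊢
    obtain ⟨⟨h1, h2⟩, hdvd⟩ := hn
    constructor
    · rw [Nat.one_le_div_iff hdb]; exact Nat.le_of_dvd (by omega) hdvd
    · exact Nat.div_le_div_right h2
  · intro m hm
    simp only [Finset.mem_filter, Finset.mem_Icc] at hm ⊢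
    obtain ⟨h1, h2⟩ := hm
    refine ⟨⟨Nat.mul_pos hdb (by omega : 0 < m), ?_⟩, Dvd.intro m rfl⟩
    calc d ^ b * m ≤ d ^ b * (N / d ^ b) := Nat.mul_le_mul_left _ h2
    _ = N / d ^ b * d ^ b := by ring
    _ ≤ N := Nat.div_mul_le_self N _
  · intro n hn
    simp only [Finset.mem_filter, Finset.mem_Icc] at hn
    exact Nat.mul_div_cancel' hn.2
  · intro m hm
    exact Nat.mul_div_cancel_left m hdb
  · intro n hn
    rfl

lemma gauss_sum_Icc (M : ℕ) : (∑ m ∈ Finset.Icc 1 M, (m:ℝ)) = M*(M+1)/2 := by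
  induction M with
  | zero => simp
  | succ M ih =>
    have : Finset.Icc 1 (M+1) = insert (M+1) (Finset.Icc 1 M) := by
      ext x; simp [Finset.mem_Icc]; omega
    rw [this, Finset.sum_insert (by simp)]
    push_cast
    rw [ih]; ring

lemma Tdiff {y : ℝ} (hy : 0 ≤ y) : |(∑ m ∈ Finset.Icc 1 ⌊y⌋₊, (m:ℝ)) - y^2/2| ≤ y := by
  rw [gauss_sum_Icc]
  rcases le_or_gt 1 y with h1 | h1
  · have hM : (⌊y⌋₊ : ℝ) ≤ y := Nat.floor_le hy
    have hM2 : y < (⌊y⌋₊ : ℝ) + 1 := Nat.lt_floor_add_one y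
    have hM0 : (0:ℝ) ≤ (⌊y⌋₊ : ℝ) := Nat.cast_nonneg _
    rw [abs_le]
    constructor <;> nlinarith
  · have : ⌊y⌋₊ = 0 := Nat.floor_eq_zero.mpr h1
    rw [this]
    simp only [Nat.cast_zero, zero_mul, zero_add, mul_one, zero_div, zero_sub, abs_neg]
    rw [abs_of_nonneg (by positivity)]
    nlinarith

lemma sum_inv_pow_le {b N : ℕ} (hb : 2 ≤ b) (hN : 1 ≤ N) :
    ∑ d ∈ Finset.Icc 1 N, ((d:ℝ)^b)⁻¹ ≤ 2 := by
  have step : ∀ d ∈ Finset.Icc 1 N, ((d:ℝ)^b)⁻¹ ≤ ((d:ℝ)^2)⁻¹ := by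
    intro d hd
    rw [Finset.mem_Icc] at hd
    have h1 : (1:ℝ) ≤ (d:ℝ) := by exact_mod_cast hd.1
    apply inv_anti₀ (by positivity)
    exact pow_le_pow_right₀ h1 hb
  refine (Finset.sum_le_sum step).trans ?_
  rw [Finset.Icc_eq_cons_Ioc hN, Finset.sum_cons]
  have := sum_Ioc_inv_sq_le_sub (α := ℝ) (k := 1) (n := N) one_ne_zero hN
  have hNpos : (0:ℝ) < N := by exact_mod_cast hN
  have hinv : (0:ℝ) ≤ (N:ℝ)⁻¹ := by positivity
  norm_num at this ⊢
  linarith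

lemma summable_shift_inv_sq (M : ℕ) : Summable (fun k : ℕ => (((k + M : ℕ) : ℝ)^2)⁻¹) := by
  have h0 : Summable (fun k : ℕ => ((k : ℝ)^2)⁻¹) := by
    simpa using Real.summable_one_div_nat_pow.mpr (by norm_num : 1 < 2)
  exact ((summable_nat_add_iff M).mpr h0).congr (fun k => by push_cast; ring_nf)

lemma tail_sq_bound {M : ℕ} (hM : 1 ≤ M) : ∑' k : ℕ, (((k + M : ℕ) : ℝ)^2)⁻¹ ≤ 2 / M := by
  apply Summable.tsum_le_of_sum_le (summable_shift_inv_sq M)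
  intro t
  obtain ⟨n, hn⟩ := t.exists_nat_subset_range
  calc ∑ k ∈ t, (((k + M : ℕ) : ℝ)^2)⁻¹
      ≤ ∑ k ∈ Finset.range n, (((k + M : ℕ) : ℝ)^2)⁻¹ := by
        apply Finset.sum_le_sum_of_subset_of_nonneg hn
        intro i _ _; positivity
    _ = ∑ i ∈ Finset.Ico M (M + n), ((i:ℝ)^2)⁻¹ := by
        rw [Finset.sum_Ico_eq_sum_range]
        refine Finset.sum_congr (by congr 1; omega) (fun i _ => by rw [add_comm])
    _ = ∑ i ∈ Finset.Ioo (M-1) (M + n), ((i:ℝ)^2)⁻¹ := by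
        have hIco : Finset.Ico M (M+n) = Finset.Ioo (M-1) (M+n) := by
          ext i; simp only [Finset.mem_Ico, Finset.mem_Ioo]; omega
        rw [hIco]
    _ ≤ 2 / (((M-1 : ℕ):ℝ) + 1) := sum_Ioo_inv_sq_le _ _
    _ = 2 / (M:ℝ) := by rw [Nat.cast_sub hM]; push_cast; ring

theorem klee_summatory (b : ℕ) (hb : 2 ≤ b) :
    (fun x : ℝ => (∑ n ∈ Finset.Icc 1 ⌊x⌋₊, (klee b n : ℂ)) -
        (x : ℂ) ^ 2 / (2 * riemannZeta (2 * b)))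
      =O[Filter.atTop] (fun x : ℝ => x) := by
  rw [Asymptotics.isBigO_iff]
  refine ⟨3, ?_⟩
  filter_upwards [Filter.eventually_ge_atTop (2:ℝ)] with x hx
  set N := ⌊x⌋₊ with hN
  have hx0 : (0:ℝ) ≤ x := by linarith
  have hN2 : 2 ≤ N := Nat.le_floor (by exact_mod_cast hx)
  have hN1 : 1 ≤ N := by omega
  have hNle : (N:ℝ) ≤ x := Nat.floor_le hx0
  have hxlt : x < (N:ℝ) + 1 := Nat.lt_floor_add_one x
  set s : ℂ := 2 * (b:ℂ) with hs
  have hsnat : s = ((2*b : ℕ) : ℂ) := by rw [hs]; push_cast; ring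
  have hsre : 1 < s.re := by
    rw [hsnat, Complex.natCast_re]
    exact_mod_cast (by omega : 1 < 2*b)
  have hzne : riemannZeta s ≠ 0 := riemannZeta_ne_zero_of_one_lt_re hsre
  have hsum : LSeriesSummable ↗μ s := LSeriesSummable_moebius_iff.mpr hsre
  -- term formulas
  have hterm : ∀ d : ℕ, d ≠ 0 → LSeries.term ↗μ s d = (μ d : ℂ) / ((d:ℂ)^(2*b)) := by
    intro d hd
    rw [LSeries.term_of_ne_zero hd, hsnat, Complex.cpow_natCast]
  have hterm_norm : ∀ d : ℕ, 1 ≤ d → ‖LSeries.term ↗μ s d‖ ≤ ((d:ℝ)^2)⁻¹ := by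
    intro d hd
    have hd1 : (1:ℝ) ≤ (d:ℝ) := by exact_mod_cast hd
    rw [hterm d (by omega), norm_div]
    have h1 : ‖((μ d : ℤ):ℂ)‖ ≤ 1 := by
      rw [Complex.norm_intCast]
      exact_mod_cast abs_moebius_le_one
    have h2 : ‖((d:ℂ))^(2*b)‖ = ((d:ℝ))^(2*b) := by
      rw [norm_pow, Complex.norm_natCast]
    rw [h2]
    have h3 : ((d:ℝ))^2 ≤ ((d:ℝ))^(2*b) := pow_le_pow_right₀ hd1 (by omega)
    have h4 : (0:ℝ) < ((d:ℝ))^2 := by positivity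
    calc ‖((μ d : ℤ):ℂ)‖ / ((d:ℝ))^(2*b) ≤ 1 / ((d:ℝ))^2 :=
          div_le_div₀ zero_le_one h1 h4 h3
    _ = ((d:ℝ)^2)⁻¹ := one_div _
  -- split the L-series
  have hsplit := Summable.sum_add_tsum_nat_add (f := LSeries.term ↗μ s) (N+1) hsum
  have hrange : Finset.range (N+1) = insert 0 (Finset.Icc 1 N) := by
    ext i; simp [Finset.mem_Icc]; omega
  have hG : ∑ i ∈ Finset.range (N+1), LSeries.term ↗μ s i
      = ∑ d ∈ Finset.Icc 1 N, LSeries.term ↗μ s d := by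
    rw [hrange, Finset.sum_insert (by simp), LSeries.term_zero, zero_add]
  -- tail bound
  have htail_le' : ∀ k : ℕ, ‖LSeries.term ↗μ s (k + (N+1))‖ ≤ (((k + (N+1) : ℕ):ℝ)^2)⁻¹ :=
    fun k => hterm_norm (k + (N+1)) (by omega)
  have hgsum := summable_shift_inv_sq (N+1)
  have hnormsum : Summable (fun k : ℕ => ‖LSeries.term ↗μ s (k + (N+1))‖) :=
    Summable.of_nonneg_of_le (fun k => norm_nonneg _) htail_le' hgsum
  have htail_norm : ‖∑' k : ℕ, LSeries.term ↗μ s (k + (N+1))‖ ≤ 2 / ((N:ℝ)+1) := by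
    calc ‖∑' k : ℕ, LSeries.term ↗μ s (k + (N+1))‖
        ≤ ∑' k : ℕ, ‖LSeries.term ↗μ s (k + (N+1))‖ := norm_tsum_le_tsum_norm hnormsum
    _ ≤ ∑' k : ℕ, (((k + (N+1) : ℕ):ℝ)^2)⁻¹ := Summable.tsum_le_tsum htail_le' hnormsum hgsum
    _ ≤ 2 / ((N+1 : ℕ):ℝ) := tail_sq_bound (by omega)
    _ = 2 / ((N:ℝ)+1) := by push_cast; ring
  -- S as double sum over ℂ
  have hS : (∑ n ∈ Finset.Icc 1 N, (klee b n : ℂ))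
      = ∑ d ∈ Finset.Icc 1 N, (μ d : ℂ) * (∑ m ∈ Finset.Icc 1 (N / d ^ b), (m:ℂ)) := by
    have h1 := sum_klee (b := b) (by omega) N
    calc (∑ n ∈ Finset.Icc 1 N, (klee b n : ℂ))
        = (((∑ n ∈ Finset.Icc 1 N, (klee b n : ℤ)) : ℤ) : ℂ) := by push_cast; rfl
    _ = (((∑ d ∈ Finset.Icc 1 N, (μ d : ℤ) * ∑ m ∈ Finset.Icc 1 (N / d ^ b), (m : ℤ)) : ℤ) : ℂ) := by
        rw [h1]
    _ = ∑ d ∈ Finset.Icc 1 N, (μ d : ℂ) * (∑ m ∈ Finset.Icc 1 (N / d ^ b), (m:ℂ)) := by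
        push_cast; rfl
  -- main constant
  have hmain : (x:ℂ)^2 / (2 * riemannZeta s) = (x:ℂ)^2/2 * LSeries ↗μ s := by
    have hA : riemannZeta s * LSeries ↗μ s = 1 := by
      have h1 := LSeries_zeta_mul_Lseries_moebius hsre
      rwa [LSeries_zeta_eq_riemannZeta hsre] at h1
    have hAinv : LSeries ↗μ s = (riemannZeta s)⁻¹ := eq_inv_of_mul_eq_one_left
      (by rwa [mul_comm] at hA)
    rw [hAinv]
    field_simp
  -- per-term difference
  have hper : ∀ d ∈ Finset.Icc 1 N,
      (μ d : ℂ) * (∑ m ∈ Finset.Icc 1 (N / d ^ b), (m:ℂ)) - (x:ℂ)^2/2 * LSeries.term ↗μ s d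
        = (μ d : ℂ) * ((((∑ m ∈ Finset.Icc 1 (N / d ^ b), (m:ℝ)) - x^2/(2*(d:ℝ)^(2*b))) : ℝ) : ℂ) := by
    intro d hd
    rw [Finset.mem_Icc] at hd
    have hd0 : ((d:ℂ)^(2*b)) ≠ 0 := pow_ne_zero _ (Nat.cast_ne_zero.mpr (by omega))
    rw [hterm d (by omega)]
    push_cast
    field_simp
  -- per-term bound
  have hperb : ∀ d ∈ Finset.Icc 1 N,
      ‖(μ d : ℂ) * ((((∑ m ∈ Finset.Icc 1 (N / d ^ b), (m:ℝ)) - x^2/(2*(d:ℝ)^(2*b))) : ℝ) : ℂ)‖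
        ≤ x * ((d:ℝ)^b)⁻¹ := by
    intro d hd
    rw [Finset.mem_Icc] at hd
    have hd1 : (1:ℝ) ≤ (d:ℝ) := by exact_mod_cast hd.1
    have hdb : (0:ℝ) < (d:ℝ)^b := by positivity
    set y : ℝ := x / (d:ℝ)^b with hy
    have hy0 : 0 ≤ y := by positivity
    have hfl : N / d ^ b = ⌊y⌋₊ := by
      rw [hy]
      rw [show ((d:ℝ)^b) = (((d^b : ℕ)):ℝ) by push_cast; ring]
      rw [Nat.floor_div_natCast x (d^b)]
    have hyx : x^2/(2*(d:ℝ)^(2*b)) = y^2/2 := by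
      rw [hy]
      rw [show ((d:ℝ))^(2*b) = ((d:ℝ)^b)^2 by rw [← pow_mul, mul_comm]]
      field_simp
    rw [hfl, hyx, norm_mul]
    have h1 : ‖((μ d : ℤ):ℂ)‖ ≤ 1 := by
      rw [Complex.norm_intCast]
      exact_mod_cast abs_moebius_le_one
    have h2 : ‖(((∑ m ∈ Finset.Icc 1 ⌊y⌋₊, (m:ℝ)) - y^2/2 : ℝ) : ℂ)‖ ≤ y := by
      rw [Complex.norm_real]
      exact Tdiff hy0
    calc ‖((μ d : ℤ):ℂ)‖ * ‖(((∑ m ∈ Finset.Icc 1 ⌊y⌋₊, (m:ℝ)) - y^2/2 : ℝ) : ℂ)‖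
        ≤ 1 * y := mul_le_mul h1 h2 (norm_nonneg _) zero_le_one
    _ = x * ((d:ℝ)^b)⁻¹ := by rw [one_mul, hy, div_eq_mul_inv]
  -- assemble
  have hLS : LSeries ↗μ s = (∑ d ∈ Finset.Icc 1 N, LSeries.term ↗μ s d)
      + ∑' k : ℕ, LSeries.term ↗μ s (k + (N+1)) := by
    rw [LSeries, ← hsplit, hG]
  rw [hS, hmain, hLS]
  have key : (∑ d ∈ Finset.Icc 1 N, (μ d : ℂ) * (∑ m ∈ Finset.Icc 1 (N / d ^ b), (m:ℂ)))
      - (x:ℂ)^2/2 * ((∑ d ∈ Finset.Icc 1 N, LSeries.term ↗μ s d)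
        + ∑' k : ℕ, LSeries.term ↗μ s (k + (N+1)))
      = (∑ d ∈ Finset.Icc 1 N, ((μ d : ℂ) * (∑ m ∈ Finset.Icc 1 (N / d ^ b), (m:ℂ))
          - (x:ℂ)^2/2 * LSeries.term ↗μ s d))
        - (x:ℂ)^2/2 * ∑' k : ℕ, LSeries.term ↗μ s (k + (N+1)) := by
    rw [Finset.sum_sub_distrib, ← Finset.mul_sum]
    ring
  rw [key]
  have hb1 : ‖∑ d ∈ Finset.Icc 1 N, ((μ d : ℂ) * (∑ m ∈ Finset.Icc 1 (N / d ^ b), (m:ℂ))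
      - (x:ℂ)^2/2 * LSeries.term ↗μ s d)‖ ≤ 2 * x := by
    calc ‖∑ d ∈ Finset.Icc 1 N, ((μ d : ℂ) * (∑ m ∈ Finset.Icc 1 (N / d ^ b), (m:ℂ))
        - (x:ℂ)^2/2 * LSeries.term ↗μ s d)‖
        ≤ ∑ d ∈ Finset.Icc 1 N, ‖(μ d : ℂ) * (∑ m ∈ Finset.Icc 1 (N / d ^ b), (m:ℂ))
          - (x:ℂ)^2/2 * LSeries.term ↗μ s d‖ := norm_sum_le _ _
    _ ≤ ∑ d ∈ Finset.Icc 1 N, x * ((d:ℝ)^b)⁻¹ := by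
        apply Finset.sum_le_sum
        intro d hd
        rw [hper d hd]
        exact hperb d hd
    _ = x * ∑ d ∈ Finset.Icc 1 N, ((d:ℝ)^b)⁻¹ := by rw [Finset.mul_sum]
    _ ≤ x * 2 := by
        apply mul_le_mul_of_nonneg_left (sum_inv_pow_le hb hN1) hx0
    _ = 2 * x := by ring
  have hb2 : ‖(x:ℂ)^2/2 * ∑' k : ℕ, LSeries.term ↗μ s (k + (N+1))‖ ≤ x := by
    rw [norm_mul]
    have h1 : ‖(x:ℂ)^2/2‖ = x^2/2 := by
      rw [norm_div, norm_pow, Complex.norm_real]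
      simp [abs_of_nonneg hx0]
    rw [h1]
    calc x^2/2 * ‖∑' k : ℕ, LSeries.term ↗μ s (k + (N+1))‖
        ≤ x^2/2 * (2/((N:ℝ)+1)) := by
          apply mul_le_mul_of_nonneg_left htail_norm (by positivity)
    _ = x^2/((N:ℝ)+1) := by ring
    _ ≤ x^2/x := by
        apply div_le_div_of_nonneg_left (by positivity) (by linarith) (by linarith)
    _ = x := by field_simp [show x ≠ 0 by linarith]
  calc ‖(∑ d ∈ Finset.Icc 1 N, ((μ d : ℂ) * (∑ m ∈ Finset.Icc 1 (N / d ^ b), (m:ℂ))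
      - (x:ℂ)^2/2 * LSeries.term ↗μ s d))
      - (x:ℂ)^2/2 * ∑' k : ℕ, LSeries.term ↗μ s (k + (N+1))‖
      ≤ ‖∑ d ∈ Finset.Icc 1 N, ((μ d : ℂ) * (∑ m ∈ Finset.Icc 1 (N / d ^ b), (m:ℂ))
        - (x:ℂ)^2/2 * LSeries.term ↗μ s d)‖
        + ‖(x:ℂ)^2/2 * ∑' k : ℕ, LSeries.term ↗μ s (k + (N+1))‖ := norm_sub_le _ _
  _ ≤ 2*x + x := add_le_add hb1 hb2
  _ ≤ 3 * ‖x‖ := by rw [Real.norm_eq_abs, abs_of_nonneg hx0]; linarith
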